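/- Let m, N_L, N_R be positive integers, let w ∈ ℝ^{m×(N_L+N_R)} be a fixed weight matrix, let μ_1, …, μ_{N_L+N_R} ∈ ℝ^m be centers with μ_k ≠ μ_l for every k ≠ l, let α_1, …, α_{N_L+N_R} ∈ (0,∞)^m be fixed strictly positive base steepness vectors, fix l ∈ {N_L+1, …, N_L+N_R}, and let y ∈ ℝ^m satisfy y_i ≠ μ_{ji} for every i = 1, …, m and every j = 1, …, N_L+N_R. Then the sum of products Σ_{i=1}^m Σ_{j=1}^{N_L} tα_{li} w_{ij} P(y; μ_l, tα_l) Λ(y; μ_j, tα_j) + Σ_{i=1}^m Σ_{k=N_L+1}^{N_L+N_R} tα_{li} w_{ik} P(y; μ_l, tα_l) P(y; μ_k, tα_k), minus the weighted sum Σ_{i=1}^m Σ_{j=1}^{N_L} tα_{li} w_{ij} H(y; (μ_j, tα_j), (μ_l, tα_l)), converges to 0 exponentially as t → ∞: there exist constants C, c > 0 such that the absolute value of this difference is at most C·exp(−c·t) for all t ≥ 1. -/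

import Mathlib

open MeasureTheory ProbabilityTheory Real

noncomputable def logisticFun (y μ α : ℝ) : ℝ := 1 / (1 + Real.exp (-α * (y - μ)))

noncomputable def rbfFun (y μ α : ℝ) : ℝ :=
  Real.exp (-α * (y - μ)) / (1 + Real.exp (-α * (y - μ))) ^ 2

noncomputable def conjLog {m : ℕ} (y μ α : Fin m → ℝ) : ℝ :=
  ∏ i, logisticFun (y i) (μ i) (α i)

noncomputable def conjRBF {m : ℕ} (y μ α : Fin m → ℝ) : ℝ :=
  ∏ i, rbfFun (y i) (μ i) (α i)

open scoped Classical in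
/-- Decision function `H(y; (μl, αl), (μk, αk))`. -/
noncomputable def decisionH {m : ℕ} (y μl αl μk αk : Fin m → ℝ) : ℝ :=
  if ∀ i, μl i < μk i then conjRBF y μk αk else 0

lemma rbf_nonneg (y μ α : ℝ) : 0 ≤ rbfFun y μ α := by
  unfold rbfFun; positivity

lemma logistic_nonneg (y μ α : ℝ) : 0 ≤ logisticFun y μ α := by
  unfold logisticFun; positivity

lemma logistic_le_one (y μ α : ℝ) : logisticFun y μ α ≤ 1 := by
  unfold logisticFun
  rw [div_le_one (by positivity)]
  linarith [Real.exp_pos (-α * (y - μ))]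

lemma rbf_le_exp (y μ α : ℝ) : rbfFun y μ α ≤ Real.exp (-|α * (y - μ)|) := by
  unfold rbfFun
  rw [neg_mul]
  set u := α * (y - μ) with hu
  rcases abs_cases u with ⟨h1, h2⟩ | ⟨h1, h2⟩
  · rw [h1, div_le_iff₀ (by positivity)]
    nlinarith [Real.exp_pos (-u), sq_nonneg (Real.exp (-u))]
  · rw [h1, neg_neg, div_le_iff₀ (by positivity)]
    have hmul : Real.exp u * Real.exp (-u) = 1 := by
      rw [← Real.exp_add]; simp
    nlinarith [Real.exp_pos u, Real.exp_pos (-u), sq_nonneg (Real.exp (-u))]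

lemma rbf_le_one (y μ α : ℝ) : rbfFun y μ α ≤ 1 := by
  calc rbfFun y μ α ≤ Real.exp (-|α * (y - μ)|) := rbf_le_exp y μ α
    _ ≤ 1 := Real.exp_le_one_iff.mpr (neg_nonpos.mpr (abs_nonneg _))

lemma conjRBF_nonneg {m : ℕ} (y μ α : Fin m → ℝ) : 0 ≤ conjRBF y μ α :=
  Finset.prod_nonneg fun _ _ => rbf_nonneg _ _ _

lemma conjRBF_le_one {m : ℕ} (y μ α : Fin m → ℝ) : conjRBF y μ α ≤ 1 :=
  Finset.prod_le_one (fun _ _ => rbf_nonneg _ _ _) (fun _ _ => rbf_le_one _ _ _)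

lemma conjLog_nonneg {m : ℕ} (y μ α : Fin m → ℝ) : 0 ≤ conjLog y μ α :=
  Finset.prod_nonneg fun _ _ => logistic_nonneg _ _ _

lemma conjLog_le_one {m : ℕ} (y μ α : Fin m → ℝ) : conjLog y μ α ≤ 1 :=
  Finset.prod_le_one (fun _ _ => logistic_nonneg _ _ _) (fun _ _ => logistic_le_one _ _ _)

lemma conjRBF_le_exp {m : ℕ} (y μ α : Fin m → ℝ) (hα : ∀ i, 0 < α i) :
    conjRBF y μ α ≤ Real.exp (-∑ i, α i * |y i - μ i|) := by
  unfold conjRBF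
  calc ∏ i, rbfFun (y i) (μ i) (α i)
      ≤ ∏ i, Real.exp (-(α i * |y i - μ i|)) := by
        apply Finset.prod_le_prod (fun i _ => rbf_nonneg _ _ _)
        intro i _
        have h := rbf_le_exp (y i) (μ i) (α i)
        rwa [abs_mul, abs_of_pos (hα i)] at h
    _ = Real.exp (-∑ i, α i * |y i - μ i|) := by
        rw [← Finset.sum_neg_distrib, Real.exp_sum]

lemma aux_bound (t a w x E : ℝ) (ht : 0 < t) (ha : 0 < a) (hx0 : 0 ≤ x) (hxE : x ≤ E) :
    |t * a * w * x| ≤ a * |w| * (t * E) := by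
  rw [abs_mul, abs_mul, abs_mul, abs_of_pos ht, abs_of_pos ha, abs_of_nonneg hx0]
  have h : t * a * |w| * x ≤ t * a * |w| * E :=
    mul_le_mul_of_nonneg_left hxE (by positivity)
  linarith [h]

theorem bilinear_rbf_sum_exp_approx
    (m NL NR : ℕ) (hm : 0 < m) (hNL : 0 < NL) (hNR : 0 < NR)
    (wL : Fin m → Fin NL → ℝ) (wR : Fin m → Fin NR → ℝ)
    (μL : Fin NL → Fin m → ℝ) (μR : Fin NR → Fin m → ℝ)
    (αL : Fin NL → Fin m → ℝ) (αR : Fin NR → Fin m → ℝ)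
    (hαL : ∀ j i, 0 < αL j i) (hαR : ∀ k i, 0 < αR k i)
    (l : Fin NR)
    (hdistL : ∀ j : Fin NL, μL j ≠ μR l)
    (hdistR : ∀ k : Fin NR, k ≠ l → μR k ≠ μR l)
    (y : Fin m → ℝ)
    (hyL : ∀ i j, y i ≠ μL j i) (hyR : ∀ i k, y i ≠ μR k i) :
    ∃ C c : ℝ, 0 < C ∧ 0 < c ∧ ∀ t : ℝ, 1 ≤ t →
      |((∑ i, ∑ j, t * αR l i * wL i j
            * (conjRBF y (μR l) (fun i' => t * αR l i')
                * conjLog y (μL j) (fun i' => t * αL j i')))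
          + ∑ i, ∑ k, t * αR l i * wR i k
            * (conjRBF y (μR l) (fun i' => t * αR l i')
                * conjRBF y (μR k) (fun i' => t * αR k i')))
        - ∑ i, ∑ j, t * αR l i * wL i j
            * decisionH y (μL j) (fun i' => t * αL j i') (μR l) (fun i' => t * αR l i')|
      ≤ C * Real.exp (-c * t) := by
  haveI : Nonempty (Fin m) := Fin.pos_iff_nonempty.mp hm
  set b : ℝ := ∑ i, αR l i * |y i - μR l i| with hbdef
  have hb : 0 < b := by
    apply Finset.sum_pos
    · intro i _
      exact mul_pos (hαR l i) (abs_pos.mpr (sub_ne_zero.mpr (hyR i l)))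
    · exact Finset.univ_nonempty
  set SA : ℝ := ∑ i, ∑ j, αR l i * |wL i j| with hSAdef
  set SB : ℝ := ∑ i, ∑ k, αR l i * |wR i k| with hSBdef
  have hSA : 0 ≤ SA := Finset.sum_nonneg fun i _ => Finset.sum_nonneg fun j _ =>
    mul_nonneg (le_of_lt (hαR l i)) (abs_nonneg _)
  have hSB : 0 ≤ SB := Finset.sum_nonneg fun i _ => Finset.sum_nonneg fun k _ =>
    mul_nonneg (le_of_lt (hαR l i)) (abs_nonneg _)
  refine ⟨(SA * 2 + SB + 1) * (2 / b), b / 2,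
    mul_pos (by linarith) (div_pos two_pos hb), half_pos hb, ?_⟩
  intro t ht
  have ht0 : 0 < t := lt_of_lt_of_le one_pos ht
  set E : ℝ := Real.exp (-(b * t)) with hEdef
  have hE0 : 0 < E := Real.exp_pos _
  -- bound on the main RBF factor
  have hR : conjRBF y (μR l) (fun i' => t * αR l i') ≤ E := by
    have h := conjRBF_le_exp y (μR l) (fun i' => t * αR l i')
      (fun i => mul_pos ht0 (hαR l i))
    have hsum : ∑ i, (t * αR l i) * |y i - μR l i| = b * t := by
      rw [hbdef, Finset.sum_mul]
      exact Finset.sum_congr rfl fun i _ => by ring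
    rwa [hsum] at h
  have hR0 : 0 ≤ conjRBF y (μR l) (fun i' => t * αR l i') := conjRBF_nonneg _ _ _
  -- bounds on the three sums
  have hA : |∑ i, ∑ j, t * αR l i * wL i j
            * (conjRBF y (μR l) (fun i' => t * αR l i')
                * conjLog y (μL j) (fun i' => t * αL j i'))| ≤ SA * (t * E) := by
    calc _ ≤ ∑ i, |∑ j, t * αR l i * wL i j
            * (conjRBF y (μR l) (fun i' => t * αR l i')
                * conjLog y (μL j) (fun i' => t * αL j i'))| := Finset.abs_sum_le_sum_abs _ _
      _ ≤ ∑ i, ∑ j, |t * αR l i * wL i j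
            * (conjRBF y (μR l) (fun i' => t * αR l i')
                * conjLog y (μL j) (fun i' => t * αL j i'))| :=
          Finset.sum_le_sum fun i _ => Finset.abs_sum_le_sum_abs _ _
      _ ≤ ∑ i, ∑ j, αR l i * |wL i j| * (t * E) := by
          refine Finset.sum_le_sum fun i _ => Finset.sum_le_sum fun j _ => ?_
          refine aux_bound t (αR l i) (wL i j) _ E ht0 (hαR l i)
            (mul_nonneg hR0 (conjLog_nonneg _ _ _)) ?_
          calc conjRBF y (μR l) (fun i' => t * αR l i')
                * conjLog y (μL j) (fun i' => t * αL j i')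
              ≤ conjRBF y (μR l) (fun i' => t * αR l i') * 1 :=
                mul_le_mul_of_nonneg_left (conjLog_le_one _ _ _) hR0
            _ = conjRBF y (μR l) (fun i' => t * αR l i') := mul_one _
            _ ≤ E := hR
      _ = SA * (t * E) := by rw [hSAdef, Finset.sum_mul]; exact Finset.sum_congr rfl (fun i _ => by rw [Finset.sum_mul])
  have hB : |∑ i, ∑ k, t * αR l i * wR i k
            * (conjRBF y (μR l) (fun i' => t * αR l i')
                * conjRBF y (μR k) (fun i' => t * αR k i'))| ≤ SB * (t * E) := by
    calc _ ≤ ∑ i, |∑ k, t * αR l i * wR i k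
            * (conjRBF y (μR l) (fun i' => t * αR l i')
                * conjRBF y (μR k) (fun i' => t * αR k i'))| := Finset.abs_sum_le_sum_abs _ _
      _ ≤ ∑ i, ∑ k, |t * αR l i * wR i k
            * (conjRBF y (μR l) (fun i' => t * αR l i')
                * conjRBF y (μR k) (fun i' => t * αR k i'))| :=
          Finset.sum_le_sum fun i _ => Finset.abs_sum_le_sum_abs _ _
      _ ≤ ∑ i, ∑ k, αR l i * |wR i k| * (t * E) := by
          refine Finset.sum_le_sum fun i _ => Finset.sum_le_sum fun k _ => ?_
          refine aux_bound t (αR l i) (wR i k) _ E ht0 (hαR l i)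
            (mul_nonneg hR0 (conjRBF_nonneg _ _ _)) ?_
          calc conjRBF y (μR l) (fun i' => t * αR l i')
                * conjRBF y (μR k) (fun i' => t * αR k i')
              ≤ conjRBF y (μR l) (fun i' => t * αR l i') * 1 :=
                mul_le_mul_of_nonneg_left (conjRBF_le_one _ _ _) hR0
            _ = conjRBF y (μR l) (fun i' => t * αR l i') := mul_one _
            _ ≤ E := hR
      _ = SB * (t * E) := by rw [hSBdef, Finset.sum_mul]; exact Finset.sum_congr rfl (fun i _ => by rw [Finset.sum_mul])
  have hH0 : ∀ j : Fin NL, 0 ≤ decisionH y (μL j) (fun i' => t * αL j i') (μR l)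
      (fun i' => t * αR l i') ∧ decisionH y (μL j) (fun i' => t * αL j i') (μR l)
      (fun i' => t * αR l i') ≤ E := by
    intro j
    unfold decisionH
    split
    · exact ⟨hR0, hR⟩
    · exact ⟨le_refl 0, le_of_lt hE0⟩
  have hC : |∑ i, ∑ j, t * αR l i * wL i j
            * decisionH y (μL j) (fun i' => t * αL j i') (μR l) (fun i' => t * αR l i')|
      ≤ SA * (t * E) := by
    calc _ ≤ ∑ i, |∑ j, t * αR l i * wL i j
            * decisionH y (μL j) (fun i' => t * αL j i') (μR l) (fun i' => t * αR l i')| :=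
          Finset.abs_sum_le_sum_abs _ _
      _ ≤ ∑ i, ∑ j, |t * αR l i * wL i j
            * decisionH y (μL j) (fun i' => t * αL j i') (μR l) (fun i' => t * αR l i')| :=
          Finset.sum_le_sum fun i _ => Finset.abs_sum_le_sum_abs _ _
      _ ≤ ∑ i, ∑ j, αR l i * |wL i j| * (t * E) := by
          refine Finset.sum_le_sum fun i _ => Finset.sum_le_sum fun j _ => ?_
          exact aux_bound t (αR l i) (wL i j) _ E ht0 (hαR l i) (hH0 j).1 (hH0 j).2
      _ = SA * (t * E) := by rw [hSAdef, Finset.sum_mul]; exact Finset.sum_congr rfl (fun i _ => by rw [Finset.sum_mul])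
  -- t * E ≤ (2/b) * exp(-(b/2)*t)
  have hkey : t * E ≤ (2 / b) * Real.exp (-(b / 2) * t) := by
    have h1 : b / 2 * t ≤ Real.exp (b / 2 * t) := by
      linarith [Real.add_one_le_exp (b / 2 * t)]
    have h2 : t ≤ (2 / b) * Real.exp (b / 2 * t) := by
      rw [div_mul_eq_mul_div, le_div_iff₀ hb]
      nlinarith
    calc t * E ≤ (2 / b) * Real.exp (b / 2 * t) * E :=
        mul_le_mul_of_nonneg_right h2 (le_of_lt hE0)
      _ = (2 / b) * Real.exp (-(b / 2) * t) := by
        rw [hEdef, mul_assoc, ← Real.exp_add]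
        congr 2
        ring
  have htri : |((∑ i, ∑ j, t * αR l i * wL i j
            * (conjRBF y (μR l) (fun i' => t * αR l i')
                * conjLog y (μL j) (fun i' => t * αL j i')))
          + ∑ i, ∑ k, t * αR l i * wR i k
            * (conjRBF y (μR l) (fun i' => t * αR l i')
                * conjRBF y (μR k) (fun i' => t * αR k i')))
        - ∑ i, ∑ j, t * αR l i * wL i j
            * decisionH y (μL j) (fun i' => t * αL j i') (μR l) (fun i' => t * αR l i')|
      ≤ (SA * 2 + SB) * (t * E) := by
    have := abs_sub (((∑ i, ∑ j, t * αR l i * wL i j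
            * (conjRBF y (μR l) (fun i' => t * αR l i')
                * conjLog y (μL j) (fun i' => t * αL j i')))
          + ∑ i, ∑ k, t * αR l i * wR i k
            * (conjRBF y (μR l) (fun i' => t * αR l i')
                * conjRBF y (μR k) (fun i' => t * αR k i'))))
        (∑ i, ∑ j, t * αR l i * wL i j
            * decisionH y (μL j) (fun i' => t * αL j i') (μR l) (fun i' => t * αR l i'))
    calc _ ≤ |(∑ i, ∑ j, t * αR l i * wL i j
            * (conjRBF y (μR l) (fun i' => t * αR l i')
                * conjLog y (μL j) (fun i' => t * αL j i')))
          + ∑ i, ∑ k, t * αR l i * wR i k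
            * (conjRBF y (μR l) (fun i' => t * αR l i')
                * conjRBF y (μR k) (fun i' => t * αR k i'))|
          + |∑ i, ∑ j, t * αR l i * wL i j
            * decisionH y (μL j) (fun i' => t * αL j i') (μR l) (fun i' => t * αR l i')| :=
        abs_sub _ _
      _ ≤ (|∑ i, ∑ j, t * αR l i * wL i j
            * (conjRBF y (μR l) (fun i' => t * αR l i')
                * conjLog y (μL j) (fun i' => t * αL j i'))|
          + |∑ i, ∑ k, t * αR l i * wR i k
            * (conjRBF y (μR l) (fun i' => t * αR l i')
                * conjRBF y (μR k) (fun i' => t * αR k i'))|)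
          + |∑ i, ∑ j, t * αR l i * wL i j
            * decisionH y (μL j) (fun i' => t * αL j i') (μR l) (fun i' => t * αR l i')| :=
        add_le_add_left (abs_add_le _ _) _
      _ ≤ (SA * (t * E) + SB * (t * E)) + SA * (t * E) := by
        exact add_le_add (add_le_add hA hB) hC
      _ = (SA * 2 + SB) * (t * E) := by ring
  calc _ ≤ (SA * 2 + SB) * (t * E) := htri
    _ ≤ (SA * 2 + SB) * ((2 / b) * Real.exp (-(b / 2) * t)) :=
        mul_le_mul_of_nonneg_left hkey (by positivity)
    _ ≤ (SA * 2 + SB + 1) * ((2 / b) * Real.exp (-(b / 2) * t)) := by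
        have : (0:ℝ) ≤ (2 / b) * Real.exp (-(b / 2) * t) := by positivity
        nlinarith
    _ = (SA * 2 + SB + 1) * (2 / b) * Real.exp (-(b / 2) * t) := by ring
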